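/- Let X be a real normed space, ω a modulus of continuity, and F : X → ℝ a convex function of class C^{1,ω}(X) with M := lip_ω(DF,X). Then for all x, y, z ∈ X: F(z) + DF(z)(x−z) ≤ F(y) + DF(y)(x−y) + M·φ_ω(‖x−y‖). In particular A_{ω,co}(F,DF,X) ≤ lip_ω(DF,X). -/

import Mathlib

open Set

section aux

variable {X : Type*} [NormedAddCommGroup X] [NormedSpace ℝ X]

private lemma path_hasDerivAt (F : X → ℝ) (hdiff : Differentiable ℝ F) (y v : X) (t : ℝ) :
    HasDerivAt (fun t : ℝ => F (y + t • v)) (fderiv ℝ F (y + t • v) v) t := by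
  have h1 : HasDerivAt (fun t : ℝ => y + t • v) v t := by
    simpa using ((hasDerivAt_id t).smul_const v).const_add y
  exact ((hdiff (y + t • v)).hasFDerivAt.comp_hasDerivAt t h1)

private lemma tangent_le (F : X → ℝ) (hconv : ConvexOn ℝ univ F)
    (hdiff : Differentiable ℝ F) (z x : X) :
    F z + fderiv ℝ F z (x - z) ≤ F x := by
  set g : ℝ → ℝ := fun t => F (z + t • (x - z)) with hg
  have hgconv : ConvexOn ℝ univ g := by
    have h := hconv.comp_affineMap (AffineMap.lineMap z x : ℝ →ᵃ[ℝ] X)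
    simp only [preimage_univ] at h
    have heq : g = F ∘ (AffineMap.lineMap z x) := by
      funext t
      show F (z + t • (x - z)) = F (AffineMap.lineMap z x t)
      rw [AffineMap.lineMap_apply]
      congr 1
      show z + t • (x - z) = t • (x - z) + z
      abel
    rw [heq]
    exact h
  have hder : HasDerivAt g (fderiv ℝ F (z + (0:ℝ) • (x - z)) (x - z)) 0 :=
    path_hasDerivAt F hdiff z (x - z) 0
  have := hgconv.le_slope_of_hasDerivAt (mem_univ (0:ℝ)) (mem_univ (1:ℝ)) zero_lt_one hder
  have hslope : slope g 0 1 = g 1 - g 0 := by simp [slope_def_field]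
  rw [hslope] at this
  simp only [zero_smul, add_zero] at this
  have hg1 : g 1 = F x := by simp [hg]
  have hg0 : g 0 = F z := by simp [hg]
  rw [hg1, hg0] at this
  linarith

end aux

theorem stmt_11 {X : Type*} [NormedAddCommGroup X] [NormedSpace ℝ X]
    (ω φ : ℝ → ℝ)
    (hnonneg : ∀ t ∈ Ici (0:ℝ), 0 ≤ ω t)
    (hmono : MonotoneOn ω (Ici (0:ℝ)))
    (hconc : ConcaveOn ℝ (Ici (0:ℝ)) ω)
    (h0 : ω 0 = 0)
    (h0' : Filter.Tendsto ω (nhdsWithin 0 (Ioi (0:ℝ))) (nhds 0))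
    (hφ : ∀ t, φ t = ∫ s in (0:ℝ)..t, ω s)
    (F : X → ℝ) (hconv : ConvexOn ℝ univ F) (hdiff : Differentiable ℝ F)
    (M : ℝ)
    (hM : ∀ x z : X, ‖fderiv ℝ F x - fderiv ℝ F z‖ ≤ M * ω ‖x - z‖) :
    ∀ x y z : X,
      F z + fderiv ℝ F z (x - z) ≤ F y + fderiv ℝ F y (x - y) + M * φ ‖x - y‖ := by
  -- ω tends to 0 within Ici 0
  have hω0 : Filter.Tendsto ω (nhdsWithin 0 (Ici (0:ℝ))) (nhds 0) := by
    have hIci : Ici (0:ℝ) = {0} ∪ Ioi 0 := by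
      ext t; simp [le_iff_lt_or_eq, eq_comm, or_comm]
    rw [hIci, nhdsWithin_union]
    rw [Filter.tendsto_sup]
    constructor
    · rw [nhdsWithin_singleton]
      simpa [h0] using (tendsto_pure_nhds ω 0)
    · exact h0'
  -- fderiv is continuous
  have hcont : Continuous (fun a : X => fderiv ℝ F a) := by
    rw [continuous_iff_continuousAt]
    intro a
    rw [ContinuousAt, ← tendsto_sub_nhds_zero_iff]
    apply squeeze_zero_norm (fun b => hM b a)
    have h1 : Filter.Tendsto (fun b : X => ‖b - a‖) (nhds a) (nhdsWithin 0 (Ici (0:ℝ))) := by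
      apply tendsto_nhdsWithin_of_tendsto_nhds_of_eventually_within
      · have hb : Filter.Tendsto (fun b : X => b - a) (nhds a) (nhds (a - a)) :=
          ((continuous_id.sub continuous_const).tendsto a)
        simpa using hb.norm
      · exact Filter.Eventually.of_forall (fun b => norm_nonneg _)
    have := hω0.comp h1
    simpa using (this.const_mul M)
  intro x y z
  have key : F x ≤ F y + fderiv ℝ F y (x - y) + M * φ ‖x - y‖ := by
    by_cases hxy : x = y
    · subst hxy
      simp [hφ, intervalIntegral.integral_same]
    set v := x - y with hv
    set r := ‖v‖ with hr
    have hr0 : 0 < r := by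
      rw [hr, hv, norm_pos_iff, sub_ne_zero]; exact hxy
    set g' : ℝ → ℝ := fun t => fderiv ℝ F (y + t • v) v with hg'
    -- FTC
    have hg'cont : Continuous g' := by
      have hpath : Continuous (fun t : ℝ => y + t • v) :=
        continuous_const.add (continuous_id.smul continuous_const)
      exact (ContinuousLinearMap.apply ℝ ℝ v).continuous.comp (hcont.comp hpath)
    have hFTC : ∫ t in (0:ℝ)..1, g' t = F x - F y := by
      have := intervalIntegral.integral_eq_sub_of_hasDerivAt
        (f := fun t : ℝ => F (y + t • v)) (f' := g')
        (fun t _ => path_hasDerivAt F hdiff y v t)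
        (hg'cont.intervalIntegrable 0 1)
      simpa [hv] using this
    -- integrability of the majorant
    have hmono' : MonotoneOn (fun t : ℝ => ω (t * r)) (uIcc (0:ℝ) 1) := by
      intro a ha b hb hab
      rw [uIcc_of_le zero_le_one] at ha hb
      exact hmono (mul_nonneg ha.1 hr0.le) (mul_nonneg hb.1 hr0.le)
        (mul_le_mul_of_nonneg_right hab hr0.le)
    have hint2 : IntervalIntegrable (fun t : ℝ => M * ω (t * r) * r)
        MeasureTheory.volume 0 1 := by
      simpa [mul_assoc, mul_comm, mul_left_comm] using
        ((hmono'.intervalIntegrable).const_mul M).mul_const r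
    have hint1 : IntervalIntegrable (fun t : ℝ => g' t - fderiv ℝ F y v)
        MeasureTheory.volume 0 1 :=
      (hg'cont.sub continuous_const).intervalIntegrable _ _
    -- pointwise bound
    have hbd : ∀ t ∈ Icc (0:ℝ) 1, g' t - fderiv ℝ F y v ≤ M * ω (t * r) * r := by
      intro t ht
      have h1 : g' t - fderiv ℝ F y v = (fderiv ℝ F (y + t • v) - fderiv ℝ F y) v := by
        simp [hg']
      rw [h1]
      calc (fderiv ℝ F (y + t • v) - fderiv ℝ F y) v
          ≤ ‖(fderiv ℝ F (y + t • v) - fderiv ℝ F y) v‖ := le_abs_self _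
        _ ≤ ‖fderiv ℝ F (y + t • v) - fderiv ℝ F y‖ * ‖v‖ :=
            (fderiv ℝ F (y + t • v) - fderiv ℝ F y).le_opNorm v
        _ ≤ (M * ω ‖(y + t • v) - y‖) * r :=
            mul_le_mul_of_nonneg_right (hM _ _) (norm_nonneg v)
        _ = M * ω (t * r) * r := by
            rw [add_sub_cancel_left, norm_smul, Real.norm_eq_abs, abs_of_nonneg ht.1]
    -- integrate
    have hineq : ∫ t in (0:ℝ)..1, (g' t - fderiv ℝ F y v)
        ≤ ∫ t in (0:ℝ)..1, M * ω (t * r) * r :=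
      intervalIntegral.integral_mono_on zero_le_one hint1 hint2 hbd
    have hL : ∫ t in (0:ℝ)..1, (g' t - fderiv ℝ F y v)
        = F x - F y - fderiv ℝ F y v := by
      rw [intervalIntegral.integral_sub (hg'cont.intervalIntegrable 0 1)
        (intervalIntegrable_const), hFTC]
      simp
    have hR : ∫ t in (0:ℝ)..1, M * ω (t * r) * r = M * φ r := by
      have hsub : r • ∫ t in (0:ℝ)..1, ω (t * r) = ∫ s in (0:ℝ)..r, ω s := by
        simpa using intervalIntegral.smul_integral_comp_mul_right ω r
      rw [hφ, ← hsub]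
      rw [intervalIntegral.integral_mul_const, intervalIntegral.integral_const_mul,
        smul_eq_mul]
      ring
    rw [hL, hR] at hineq
    linarith
  calc F z + fderiv ℝ F z (x - z) ≤ F x := tangent_le F hconv hdiff z x
    _ ≤ _ := key
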